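/- Let A ∈ ℂ^{d_U×d_U} and B ∈ ℂ^{d_V×d_V} be antisymmetric. Contracting the Gaussian Grassmann kernels exp((1/2)Θ_U^T A Θ_U) and exp((1/2)Θ_V^T B Θ_V) over the pair (θ_{d_U}, θ_{d_U+1}) via ∫dθ_{d_U+1}∫dθ_{d_U} exp(θ_{d_U}θ_{d_U+1}) (·) yields a Gaussian kernel exp((1/2)Θ_W^T C Θ_W), where C is antisymmetric with upper-left block A restricted to indices 1..d_U−1, lower-right block B restricted to indices 2..d_V, and off-diagonal block the rank-one matrix with entries C_{i, d_U−1+j−1} = A_{i,d_U} B_{1,j} for 1 ≤ i ≤ d_U−1, 2 ≤ j ≤ d_V. -/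

import Mathlib

set_option maxHeartbeats 2000000
set_option synthInstance.maxHeartbeats 400000


open scoped BigOperators
open Matrix

noncomputable section

/-- The Grassmann algebra on `N` anticommuting generators over `ℂ`. -/
abbrev Gr (N : ℕ) := CliffordAlgebra (0 : QuadraticForm ℂ (Fin N → ℂ))

/-- The Grassmann generator `θ_i`. -/
def gen {N : ℕ} (i : Fin N) : Gr N :=
  CliffordAlgebra.ι (0 : QuadraticForm ℂ (Fin N → ℂ)) (Pi.single i 1)

/-- The Berezin integral `∫ dθ_i`: it satisfies `∫dθ θ = 1` and `∫dθ 1 = 0`. -/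
def berezin {N : ℕ} (i : Fin N) : Gr N →ₗ[ℂ] Gr N :=
  CliffordAlgebra.contractLeft (Q := (0 : QuadraticForm ℂ (Fin N → ℂ)))
    (LinearMap.proj i)

/-- The (terminating) exponential power series in the Grassmann algebra. -/
def gexp {N : ℕ} (a : Gr N) : Gr N :=
  ∑ k ∈ Finset.range (N + 1), (k.factorial : ℂ)⁻¹ • a ^ k

/-- The canonical linear inclusion of vectors. -/
def ιG {N : ℕ} : (Fin N → ℂ) →ₗ[ℂ] Gr N :=
  CliffordAlgebra.ι (0 : QuadraticForm ℂ (Fin N → ℂ))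

namespace GrAux

variable {N : ℕ}

lemma ι_anticomm (v w : Fin N → ℂ) : ιG v * ιG w = -(ιG w * ιG v) := by
  have h := CliffordAlgebra.ι_mul_ι_add_swap (Q := (0 : QuadraticForm ℂ (Fin N → ℂ))) v w
  have h0 : QuadraticMap.polar (0 : QuadraticForm ℂ (Fin N → ℂ)) v w = 0 := by
    simp [QuadraticMap.polar]
  rw [h0, map_zero] at h
  exact eq_neg_of_add_eq_zero_left h

lemma ι_sq (v : Fin N → ℂ) : ιG v * ιG v = 0 := by
  have h := CliffordAlgebra.ι_sq_scalar (Q := (0 : QuadraticForm ℂ (Fin N → ℂ))) v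
  simpa [ιG] using h

lemma pair_central (v w : Fin N → ℂ) (z : Gr N) : Commute (ιG v * ιG w) z := by
  show Commute (CliffordAlgebra.ι _ v * CliffordAlgebra.ι _ w) z
  induction z using CliffordAlgebra.induction with
  | algebraMap r => exact (Algebra.commutes r _).symm
  | ι u =>
      show _ = _
      calc ιG v * ιG w * ιG u = ιG v * -(ιG u * ιG w) := by rw [mul_assoc, ι_anticomm w u]
        _ = -(ιG v * ιG u) * ιG w := by rw [mul_neg, neg_mul, mul_assoc]
        _ = ιG u * ιG v * ιG w := by rw [← ι_anticomm]
        _ = ιG u * (ιG v * ιG w) := by rw [mul_assoc]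
  | mul a b ha hb => exact ha.mul_right hb
  | add a b ha hb => exact ha.add_right hb

lemma pair_sq (v w : Fin N → ℂ) : (ιG v * ιG w) * (ιG v * ιG w) = 0 := by
  have h : ιG w * ιG v = -(ιG v * ιG w) := ι_anticomm w v
  calc (ιG v * ιG w) * (ιG v * ιG w) = ιG v * (ιG w * ιG v) * ιG w := by
        simp [mul_assoc]
    _ = ιG v * -(ιG v * ιG w) * ιG w := by rw [h]
    _ = -(ιG v * ιG v * (ιG w * ιG w)) := by simp [mul_assoc]
    _ = 0 := by rw [ι_sq, zero_mul, neg_zero]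

/-- The span of the generators. -/
def GG (N : ℕ) : Submodule ℂ (Gr N) := LinearMap.range (ιG (N := N))

lemma GG_pow_eq_bot {k : ℕ} (hk : N < k) : (GG N) ^ k = ⊥ := by
  rw [Submodule.pow_eq_span_pow_set, Submodule.span_eq_bot]
  rintro x hx
  rw [Set.mem_pow] at hx
  obtain ⟨f, hf⟩ := hx
  choose v hv using fun i => (f i).2
  have hx' : x = ExteriorAlgebra.ιMulti ℂ k (fun i => v i) := by
    rw [ExteriorAlgebra.ιMulti_apply, ← hf]
    congr 1
    exact congrArg _ (funext fun i => (hv i).symm)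
  rw [hx']
  apply AlternatingMap.map_linearDependent
  intro hli
  have := hli.fintype_card_le_finrank
  simp [Module.finrank_pi] at this
  omega

lemma mem_pow_of_mem {u : Gr N} {p : Submodule ℂ (Gr N)} (hu : u ∈ p) (k : ℕ) :
    u ^ k ∈ p ^ k := by
  induction k with
  | zero => simpa [pow_zero] using Submodule.one_le.mp le_rfl
  | succ k ih => rw [pow_succ, pow_succ]; exact Submodule.mul_mem_mul ih hu

lemma pow_N_eq_zero {u : Gr N} (hu : u ∈ GG N * GG N) (hN : 0 < N) : u ^ N = 0 := by
  have h1 : u ^ N ∈ (GG N * GG N) ^ N := mem_pow_of_mem hu N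
  rw [← pow_two, ← pow_mul] at h1
  rw [GG_pow_eq_bot (by omega)] at h1
  simpa using h1

lemma mul_pow_vanish {u w : Gr N} (hu : u ∈ GG N * GG N) (hw : w ∈ GG N * GG N)
    (i j : ℕ) (hij : N < i + j) : u ^ i * w ^ j = 0 := by
  have h1 : u ^ i ∈ (GG N * GG N) ^ i := mem_pow_of_mem hu i
  have h2 : w ^ j ∈ (GG N * GG N) ^ j := mem_pow_of_mem hw j
  have h3 : u ^ i * w ^ j ∈ (GG N * GG N) ^ i * (GG N * GG N) ^ j :=
    Submodule.mul_mem_mul h1 h2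
  rw [← pow_add, ← pow_two, ← pow_mul] at h3
  rw [GG_pow_eq_bot (by omega)] at h3
  simpa using h3

lemma gexp_zero : gexp (0 : Gr N) = 1 := by
  unfold gexp
  rw [Finset.sum_eq_single 0]
  · simp
  · intro k _ hk; simp [zero_pow hk]
  · simp

lemma fact_inv_succ (k : ℕ) :
    ((k + 1).factorial : ℂ)⁻¹ * ((k:ℂ) + 1) = ((k.factorial : ℂ))⁻¹ := by
  have h1 : ((k:ℂ) + 1) ≠ 0 := Nat.cast_add_one_ne_zero k
  rw [Nat.factorial_succ]
  push_cast
  rw [mul_inv, mul_comm ((k:ℂ)+1)⁻¹, mul_assoc, inv_mul_cancel₀ h1, mul_one]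

/-- E1 -/
lemma gexp_add_sq (u v : Gr N) (hc : Commute u v) (hv : v * v = 0) (hu : u ^ N = 0) :
    gexp (u + v) = gexp u * (1 + v) := by
  have hpow : ∀ k : ℕ, (u + v) ^ (k + 1) = u ^ (k + 1) + ((k:ℂ) + 1) • (u ^ k * v) := by
    intro k
    induction k with
    | zero => simp
    | succ k ih =>
        have hvu : v * u = u * v := hc.symm.eq
        rw [pow_succ, ih, add_mul, mul_add, mul_add, smul_mul_assoc, smul_mul_assoc,
          mul_assoc (u ^ k) v v, hv, mul_zero, smul_zero, add_zero,
          mul_assoc (u ^ k) v u, hvu, ← mul_assoc (u ^ k) u v, ← pow_succ, ← pow_succ]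
        push_cast
        rw [add_smul, one_smul]
        module
  have hgu : gexp u = (∑ k ∈ Finset.range N, ((k+1).factorial : ℂ)⁻¹ • u ^ (k+1)) + 1 := by
    unfold gexp
    rw [Finset.sum_range_succ' (fun k => (k.factorial : ℂ)⁻¹ • u ^ k)]
    norm_num
  have hguv : gexp u * v = ∑ k ∈ Finset.range N, ((k.factorial : ℂ))⁻¹ • (u ^ k * v) := by
    unfold gexp
    rw [Finset.sum_range_succ, hu, smul_zero, add_zero, Finset.sum_mul]
    simp [smul_mul_assoc]
  have h2 : ∀ k : ℕ, ((k+1).factorial : ℂ)⁻¹ • (((k:ℂ) + 1) • (u ^ k * v))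
      = ((k.factorial : ℂ))⁻¹ • (u ^ k * v) := by
    intro k
    rw [smul_smul, fact_inv_succ]
  calc gexp (u + v)
      = (∑ k ∈ Finset.range N, ((k+1).factorial : ℂ)⁻¹ • (u + v) ^ (k+1)) + 1 := by
        unfold gexp
        rw [Finset.sum_range_succ' (fun k => (k.factorial : ℂ)⁻¹ • (u + v) ^ k)]
        norm_num
    _ = (∑ k ∈ Finset.range N, (((k+1).factorial : ℂ)⁻¹ • u ^ (k+1)
          + ((k.factorial : ℂ))⁻¹ • (u ^ k * v))) + 1 := by
        congr 1
        refine Finset.sum_congr rfl fun k _ => ?_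
        rw [hpow k, smul_add, h2]
    _ = ((∑ k ∈ Finset.range N, ((k+1).factorial : ℂ)⁻¹ • u ^ (k+1)) + 1)
          + ∑ k ∈ Finset.range N, ((k.factorial : ℂ))⁻¹ • (u ^ k * v) := by
        rw [Finset.sum_add_distrib]; abel
    _ = gexp u + gexp u * v := by rw [← hgu, ← hguv]
    _ = gexp u * (1 + v) := by rw [mul_add, mul_one]

lemma triangle {M : Type*} [AddCommMonoid M] (F : ℕ → ℕ → M) (K : ℕ) :
    ∑ k ∈ Finset.range K, ∑ i ∈ Finset.range (k + 1), F i (k - i)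
      = ∑ i ∈ Finset.range K, ∑ j ∈ Finset.range (K - i), F i j := by
  induction K with
  | zero => simp
  | succ K ih =>
      rw [Finset.sum_range_succ, ih]
      conv_rhs => rw [Finset.sum_range_succ]
      have h1 : ∀ i ∈ Finset.range K,
          ∑ j ∈ Finset.range (K + 1 - i), F i j
            = ∑ j ∈ Finset.range (K - i), F i j + F i (K - i) := by
        intro i hi
        have h : K + 1 - i = (K - i) + 1 := by
          have := Finset.mem_range.mp hi; omega
        rw [h, Finset.sum_range_succ]
      rw [Finset.sum_congr rfl h1, Finset.sum_add_distrib]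
      rw [Finset.sum_range_succ (fun i => F i (K - i))]
      simp only [Nat.sub_self, Nat.add_sub_cancel_left]
      simp only [Finset.sum_range_one]
      abel

/-- E2 -/
lemma gexp_add (u w : Gr N) (hc : Commute u w)
    (h0 : ∀ i j : ℕ, N < i + j → u ^ i * w ^ j = 0) :
    gexp (u + w) = gexp u * gexp w := by
  have key : ∀ (k i : ℕ), i ≤ k →
      ((k.factorial : ℂ))⁻¹ • (u ^ i * w ^ (k - i) * (k.choose i : Gr N))
        = ((i.factorial : ℂ)⁻¹ * (((k - i).factorial : ℂ))⁻¹) • (u ^ i * w ^ (k - i)) := by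
    intro k i hik
    have hz : u ^ i * w ^ (k - i) * (k.choose i : Gr N)
        = (k.choose i : ℂ) • (u ^ i * w ^ (k - i)) := by
      rw [← (Nat.cast_commute (k.choose i) (u ^ i * w ^ (k - i))).eq,
        ← nsmul_eq_mul, ← Nat.cast_smul_eq_nsmul ℂ]
    rw [hz, smul_smul]
    congr 1
    have hcf : (k.choose i : ℂ) * i.factorial * (k - i).factorial = k.factorial := by
      exact_mod_cast congrArg (Nat.cast (R := ℂ)) (Nat.choose_mul_factorial_mul_factorial hik)
    have h1 : (i.factorial : ℂ) ≠ 0 := Nat.cast_ne_zero.mpr i.factorial_ne_zero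
    have h2 : ((k-i).factorial : ℂ) ≠ 0 := Nat.cast_ne_zero.mpr (k-i).factorial_ne_zero
    have h3 : (k.factorial : ℂ) ≠ 0 := Nat.cast_ne_zero.mpr k.factorial_ne_zero
    field_simp
    linear_combination hcf
  have hrhs : gexp u * gexp w = ∑ i ∈ Finset.range (N+1), ∑ j ∈ Finset.range (N+1),
      ((i.factorial : ℂ)⁻¹ * (j.factorial : ℂ)⁻¹) • (u ^ i * w ^ j) := by
    unfold gexp
    rw [Finset.sum_mul_sum]
    refine Finset.sum_congr rfl fun i _ => Finset.sum_congr rfl fun j _ => ?_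
    rw [smul_mul_assoc, mul_smul_comm, smul_smul]
  have htrim : ∀ i ∈ Finset.range (N+1),
      ∑ j ∈ Finset.range (N+1), ((i.factorial : ℂ)⁻¹ * (j.factorial : ℂ)⁻¹) • (u ^ i * w ^ j)
        = ∑ j ∈ Finset.range (N+1-i),
            ((i.factorial : ℂ)⁻¹ * (j.factorial : ℂ)⁻¹) • (u ^ i * w ^ j) := by
    intro i hi
    refine (Finset.sum_subset ?_ ?_).symm
    · intro j hj
      rw [Finset.mem_range] at hj ⊢
      omega
    · intro j hj hj2
      rw [Finset.mem_range] at hj hj2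
      have h : N < i + j := by omega
      rw [h0 i j h, smul_zero]
  rw [hrhs, Finset.sum_congr rfl htrim]
  unfold gexp
  calc ∑ k ∈ Finset.range (N+1), (k.factorial : ℂ)⁻¹ • (u + w) ^ k
      = ∑ k ∈ Finset.range (N+1), ∑ i ∈ Finset.range (k+1),
          ((i.factorial : ℂ)⁻¹ * (((k - i).factorial : ℂ))⁻¹) • (u ^ i * w ^ (k - i)) := by
        refine Finset.sum_congr rfl fun k _ => ?_
        rw [hc.add_pow, Finset.smul_sum]
        exact Finset.sum_congr rfl fun i hi => key k i (by
          have := Finset.mem_range.mp hi; omega)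
    _ = ∑ i ∈ Finset.range (N+1), ∑ j ∈ Finset.range (N+1-i),
          ((i.factorial : ℂ)⁻¹ * ((j.factorial : ℂ))⁻¹) • (u ^ i * w ^ j) := by
        exact triangle (fun i j => ((i.factorial : ℂ)⁻¹ * ((j.factorial : ℂ))⁻¹)
          • (u ^ i * w ^ j)) (N+1)

lemma ber_ι_mul (i : Fin N) (v : Fin N → ℂ) (z : Gr N) :
    berezin i (ιG v * z) = v i • z - ιG v * berezin i z := by
  have h := CliffordAlgebra.contractLeft_ι_mul (Q := (0 : QuadraticForm ℂ (Fin N → ℂ)))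
    (LinearMap.proj i) v z
  exact h

lemma ber_gen_mul (i j : Fin N) (z : Gr N) :
    berezin i (gen j * z)
      = (if i = j then (1:ℂ) else 0) • z - gen j * berezin i z := by
  have h := ber_ι_mul i (Pi.single j 1) z
  rw [gen]
  rw [show (CliffordAlgebra.ι (0 : QuadraticForm ℂ (Fin N → ℂ))) (Pi.single j 1) = ιG (N := N) (Pi.single j 1) from rfl, h]
  congr 2
  by_cases h' : i = j
  · subst h'; simp
  · simp [Pi.single_eq_of_ne h', h']

lemma ber_gen_self (i : Fin N) (z : Gr N) :
    berezin i (gen i * z) = z - gen i * berezin i z := by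
  rw [ber_gen_mul, if_pos rfl, one_smul]

lemma ber_gen_ne {i j : Fin N} (h : i ≠ j) (z : Gr N) :
    berezin i (gen j * z) = -(gen j * berezin i z) := by
  rw [ber_gen_mul, if_neg h, zero_smul, zero_sub]

/-- The subalgebra of elements not involving `θ_i`. -/
def avoid (i : Fin N) : Subalgebra ℂ (Gr N) :=
  Algebra.adjoin ℂ (gen '' {j | j ≠ i})

lemma gen_mem_avoid {i j : Fin N} (h : j ≠ i) : gen j ∈ avoid i :=
  Algebra.subset_adjoin ⟨j, h, rfl⟩

lemma ber_avoid {i : Fin N} {z : Gr N} (hz : z ∈ avoid i) : berezin i z = 0 := by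
  rw [avoid, ← Subalgebra.mem_toSubmodule, Algebra.adjoin_eq_span] at hz
  refine Submodule.span_induction ?_ ?_ ?_ ?_ hz
  · intro w hw
    obtain ⟨l, hl, rfl⟩ := Submonoid.exists_list_of_mem_closure hw
    clear hw hz
    induction l with
    | nil =>
        rw [List.prod_nil]
        exact CliffordAlgebra.contractLeft_one (0 : QuadraticForm ℂ (Fin N → ℂ))
          (LinearMap.proj i)
    | cons y l ih =>
        obtain ⟨j, hji, rfl⟩ := hl y List.mem_cons_self
        have hl' : ∀ w ∈ l, w ∈ gen '' {j | j ≠ i} := fun w hw => hl w (List.mem_cons_of_mem _ hw)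
        rw [List.prod_cons, ber_gen_ne (Ne.symm hji), ih hl', mul_zero, neg_zero]
  · simp
  · intro a b _ _ ha hb; rw [map_add, ha, hb, add_zero]
  · intro c a _ ha; rw [_root_.map_smul, ha, smul_zero]

lemma gen_mem_GG (i : Fin N) : gen i ∈ GG N := ⟨Pi.single i 1, rfl⟩

lemma gen_anticomm (i j : Fin N) : gen i * gen j = -(gen j * gen i) :=
  ι_anticomm (Pi.single i 1) (Pi.single j 1)

lemma gen_sq (i : Fin N) : gen i * gen i = 0 := ι_sq (Pi.single i 1)

lemma gen_pair_central (i j : Fin N) (z : Gr N) : Commute (gen i * gen j) z :=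
  pair_central (Pi.single i 1) (Pi.single j 1) z

lemma expand_lemma (a b p xx yy : Gr N)
    (h1 : Commute xx b) (h2 : ∀ z, Commute p z) (h3 : ∀ z, Commute yy z)
    (h4 : ∀ z, Commute xx z) (hpx : p * xx = 0) (hpy : p * yy = 0) :
    (1 + p) * (a * (1 + xx) * (b * (1 + yy)))
      = a * b + yy * (a * b) + xx * (a * b) + (xx * yy) * (a * b) + p * (a * b) := by
  have hpxy : p * (xx * yy) = 0 := by rw [← mul_assoc, hpx, zero_mul]
  have e1 : (1 + xx) * b = b * (1 + xx) := by
    rw [add_mul, mul_add, one_mul, mul_one, h1.eq]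
  calc (1 + p) * (a * (1 + xx) * (b * (1 + yy)))
      = (1 + p) * (a * ((1 + xx) * b) * (1 + yy)) := by
        rw [← mul_assoc (a * (1 + xx)) b (1 + yy), mul_assoc a (1 + xx) b]
    _ = (1 + p) * (a * (b * (1 + xx)) * (1 + yy)) := by rw [e1]
    _ = a * b + a * b * yy + a * b * xx + a * b * (xx * yy)
          + (p * (a * b) + p * (a * b) * yy + p * (a * b) * xx
            + p * (a * b) * (xx * yy)) := by noncomm_ring
    _ = a * b + yy * (a * b) + xx * (a * b) + (xx * yy) * (a * b) + p * (a * b) := by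
        rw [(h2 (a * b)).eq, mul_assoc (a * b) p yy, hpy, mul_zero,
          mul_assoc (a * b) p xx, hpx, mul_zero, mul_assoc (a * b) p (xx * yy), hpxy,
          mul_zero, add_zero, add_zero, add_zero, ← (h2 (a * b)).eq, ← (h3 (a * b)).eq,
          ← (h4 (a * b)).eq, ← ((h4 (a * b)).mul_left (h3 (a * b))).eq]

end GrAux

section Contract

/- `d_U = m + 1`, `d_V = n + 1`; the total Grassmann algebra has
`d_U + d_V = m + n + 2` generators `θ_1, …, θ_{d_U}, θ_{d_U+1}, …, θ_{d_U+d_V}`. -/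
variable (m n : ℕ)

open GrAux

/-- `Θ_U`: the generators `θ_1, …, θ_{d_U}`. -/
def ΘU (i : Fin (m + 1)) : Gr ((m + 1) + (n + 1)) := gen (Fin.castAdd (n + 1) i)

/-- `Θ_V`: the generators `θ_{d_U+1}, …, θ_{d_U+d_V}`. -/
def ΘV (j : Fin (n + 1)) : Gr ((m + 1) + (n + 1)) := gen (Fin.natAdd (m + 1) j)

/-- `Θ_W`: the remaining generators after removing `θ_{d_U}` and `θ_{d_U+1}`,
namely `θ_1, …, θ_{d_U−1}, θ_{d_U+2}, …, θ_{d_U+d_V}`, in order. -/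
def ΘW (i : Fin (m + n)) : Gr ((m + 1) + (n + 1)) :=
  if h : i.1 < m then gen ⟨i.1, by omega⟩ else gen ⟨i.1 + 2, by have := i.2; omega⟩

/-- The contracted generating matrix `C`: upper-left block `A` restricted to
indices `1..d_U−1`, lower-right block `B` restricted to `2..d_V`, and rank-one
off-diagonal blocks with entries `A_{i,d_U} B_{1,j}` (and their negatives). -/
def Cmat (A : Matrix (Fin (m + 1)) (Fin (m + 1)) ℂ)
    (B : Matrix (Fin (n + 1)) (Fin (n + 1)) ℂ) : Matrix (Fin (m + n)) (Fin (m + n)) ℂ :=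
  fun i j =>
    if hi : i.1 < m then
      if hj : j.1 < m then A ⟨i.1, by omega⟩ ⟨j.1, by omega⟩
      else A ⟨i.1, by omega⟩ (Fin.last m) * B 0 ⟨j.1 - m + 1, by have := j.2; omega⟩
    else
      if hj : j.1 < m then
        -(A ⟨j.1, by omega⟩ (Fin.last m) * B 0 ⟨i.1 - m + 1, by have := i.2; omega⟩)
      else B ⟨i.1 - m + 1, by have := i.2; omega⟩ ⟨j.1 - m + 1, by have := j.2; omega⟩

/-- contracting the Gaussian kernels `exp((1/2)Θ_U^T A Θ_U)` and
`exp((1/2)Θ_V^T B Θ_V)` over the pair `(θ_{d_U}, θ_{d_U+1})` via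
`∫dθ_{d_U+1} ∫dθ_{d_U} exp(θ_{d_U} θ_{d_U+1}) (·)` yields the Gaussian kernel
`exp((1/2)Θ_W^T C Θ_W)` with `C` as in `Cmat`. -/
theorem gaussian_contraction (A : Matrix (Fin (m + 1)) (Fin (m + 1)) ℂ)
    (B : Matrix (Fin (n + 1)) (Fin (n + 1)) ℂ)
    (hA : Aᵀ = -A) (hB : Bᵀ = -B) :
    berezin (Fin.natAdd (m + 1) (0 : Fin (n + 1)))
      (berezin (Fin.castAdd (n + 1) (Fin.last m))
        (gexp (ΘU m n (Fin.last m) * ΘV m n 0) *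
          (gexp ((2 : ℂ)⁻¹ • ∑ i : Fin (m + 1), ∑ j : Fin (m + 1),
              A i j • (ΘU m n i * ΘU m n j)) *
           gexp ((2 : ℂ)⁻¹ • ∑ i : Fin (n + 1), ∑ j : Fin (n + 1),
              B i j • (ΘV m n i * ΘV m n j))))) =
      gexp ((2 : ℂ)⁻¹ • ∑ i : Fin (m + n), ∑ j : Fin (m + n),
        Cmat m n A B i j • (ΘW m n i * ΘW m n j)) := by
  classical
  set μ : Fin ((m+1)+(n+1)) := Fin.castAdd (n + 1) (Fin.last m) with hμdef
  set ν : Fin ((m+1)+(n+1)) := Fin.natAdd (m + 1) (0 : Fin (n+1)) with hνdef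
  set ca : Fin m → Fin ((m+1)+(n+1)) := fun i => Fin.castAdd (n + 1) i.castSucc with hcadef
  set na : Fin n → Fin ((m+1)+(n+1)) := fun j => Fin.natAdd (m + 1) j.succ with hnadef
  have hN0 : 0 < (m+1)+(n+1) := by omega
  have hcaμ : ∀ i : Fin m, ca i ≠ μ := by
    intro i
    have := i.2
    simp only [hcadef, hμdef, Ne, Fin.ext_iff, Fin.coe_castAdd, Fin.coe_castSucc, Fin.val_last]
    omega
  have hcaν : ∀ i : Fin m, ca i ≠ ν := by
    intro i
    have := i.2
    simp only [hcadef, hνdef, Ne, Fin.ext_iff, Fin.coe_castAdd, Fin.coe_castSucc,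
      Fin.coe_natAdd, Fin.val_zero]
    omega
  have hnaμ : ∀ j : Fin n, na j ≠ μ := by
    intro j
    simp only [hnadef, hμdef, Ne, Fin.ext_iff, Fin.coe_natAdd, Fin.val_succ, Fin.coe_castAdd,
      Fin.val_last]
    omega
  have hnaν : ∀ j : Fin n, na j ≠ ν := by
    intro j
    simp only [hnadef, hνdef, Ne, Fin.ext_iff, Fin.coe_natAdd, Fin.val_succ, Fin.val_zero]
    omega
  have hνμ : ν ≠ μ := by
    simp only [hνdef, hμdef, Ne, Fin.ext_iff, Fin.coe_natAdd, Fin.val_zero, Fin.coe_castAdd,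
      Fin.val_last]
    omega
  set vx : Fin ((m+1)+(n+1)) → ℂ :=
    ∑ i : Fin m, A i.castSucc (Fin.last m) • (Pi.single (ca i) 1 : Fin ((m+1)+(n+1)) → ℂ) with hvxdef
  set vy : Fin ((m+1)+(n+1)) → ℂ := ∑ j : Fin n, B 0 j.succ • (Pi.single (na j) 1 : Fin ((m+1)+(n+1)) → ℂ) with hvydef
  set x : Gr ((m+1)+(n+1)) := ιG vx with hxdef
  set y : Gr ((m+1)+(n+1)) := ιG vy with hydef
  have hxsum : x = ∑ i : Fin m, A i.castSucc (Fin.last m) • gen (ca i) := by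
    rw [hxdef, hvxdef, map_sum]
    refine Finset.sum_congr rfl fun i _ => ?_
    rw [_root_.map_smul]
    rfl
  have hysum : y = ∑ j : Fin n, B 0 j.succ • gen (na j) := by
    rw [hydef, hvydef, map_sum]
    refine Finset.sum_congr rfl fun j _ => ?_
    rw [_root_.map_smul]
    rfl
  have hvxμ : vx μ = 0 := by
    rw [hvxdef, Finset.sum_apply]
    refine Finset.sum_eq_zero fun i _ => ?_
    rw [Pi.smul_apply, Pi.single_eq_of_ne (Ne.symm (hcaμ i)), smul_zero]
  have hvxν : vx ν = 0 := by
    rw [hvxdef, Finset.sum_apply]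
    refine Finset.sum_eq_zero fun i _ => ?_
    rw [Pi.smul_apply, Pi.single_eq_of_ne (Ne.symm (hcaν i)), smul_zero]
  set QA : Gr ((m+1)+(n+1)) :=
    (2:ℂ)⁻¹ • ∑ i : Fin m, ∑ j : Fin m,
      A i.castSucc j.castSucc • (gen (ca i) * gen (ca j)) with hQAdef
  set QB : Gr ((m+1)+(n+1)) :=
    (2:ℂ)⁻¹ • ∑ i : Fin n, ∑ j : Fin n,
      B i.succ j.succ • (gen (na i) * gen (na j)) with hQBdef
  set P : Gr ((m+1)+(n+1)) := gen μ * gen ν with hPdef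
  set X : Gr ((m+1)+(n+1)) := x * gen μ with hXdef
  set Y : Gr ((m+1)+(n+1)) := gen ν * y with hYdef
  -- the three sum identities
  have hSA : (2 : ℂ)⁻¹ • ∑ i : Fin (m + 1), ∑ j : Fin (m + 1),
      A i j • (ΘU m n i * ΘU m n j) = QA + X := by
    have hUg : ∀ i : Fin (m+1), ΘU m n i = gen (Fin.castAdd (n+1) i) := fun i => rfl
    have hca' : ∀ i : Fin m, Fin.castAdd (n+1) i.castSucc = ca i := fun i => rfl
    have hμ' : Fin.castAdd (n+1) (Fin.last m) = μ := rfl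
    have hAll : A (Fin.last m) (Fin.last m) = 0 := by
      have h := congrFun (congrFun hA (Fin.last m)) (Fin.last m)
      rw [Matrix.transpose_apply, Matrix.neg_apply] at h
      have h2 : (2:ℂ) * A (Fin.last m) (Fin.last m) = 0 := by linear_combination h
      exact (mul_eq_zero.mp h2).resolve_left two_ne_zero
    have hswap : ∀ j : Fin m,
        A (Fin.last m) j.castSucc • (gen μ * gen (ca j))
          = A j.castSucc (Fin.last m) • (gen (ca j) * gen μ) := by
      intro j
      have h1 : A (Fin.last m) j.castSucc = -A j.castSucc (Fin.last m) := by
        have h := congrFun (congrFun hA j.castSucc) (Fin.last m)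
        rwa [Matrix.transpose_apply, Matrix.neg_apply] at h
      rw [h1, gen_anticomm μ (ca j), smul_neg, neg_smul, neg_neg]
    have hS : X = ∑ i : Fin m, A i.castSucc (Fin.last m) • (gen (ca i) * gen μ) := by
      rw [hXdef, hxsum, Finset.sum_mul]
      exact Finset.sum_congr rfl fun i _ => smul_mul_assoc _ _ _
    simp only [hUg]
    simp only [Fin.sum_univ_castSucc (n := m)]
    simp only [hca', hμ']
    rw [Finset.sum_add_distrib]
    simp only [hswap]
    rw [hAll, zero_smul, add_zero, hQAdef, hS]
    module
  have hSB : (2 : ℂ)⁻¹ • ∑ i : Fin (n + 1), ∑ j : Fin (n + 1),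
      B i j • (ΘV m n i * ΘV m n j) = QB + Y := by
    have hVg : ∀ j : Fin (n+1), ΘV m n j = gen (Fin.natAdd (m+1) j) := fun j => rfl
    have hna' : ∀ j : Fin n, Fin.natAdd (m+1) j.succ = na j := fun j => rfl
    have hν' : Fin.natAdd (m+1) (0 : Fin (n+1)) = ν := rfl
    have hB00 : B 0 0 = 0 := by
      have h := congrFun (congrFun hB 0) 0
      rw [Matrix.transpose_apply, Matrix.neg_apply] at h
      have h2 : (2:ℂ) * B 0 0 = 0 := by linear_combination h
      exact (mul_eq_zero.mp h2).resolve_left two_ne_zero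
    have hswap : ∀ i : Fin n,
        B i.succ 0 • (gen (na i) * gen ν)
          = B 0 i.succ • (gen ν * gen (na i)) := by
      intro i
      have h1 : B i.succ 0 = -B 0 i.succ := by
        have h := congrFun (congrFun hB 0) i.succ
        rwa [Matrix.transpose_apply, Matrix.neg_apply] at h
      rw [h1, gen_anticomm (na i) ν, smul_neg, neg_smul, neg_neg]
    have hS : Y = ∑ j : Fin n, B 0 j.succ • (gen ν * gen (na j)) := by
      rw [hYdef, hysum, Finset.mul_sum]
      exact Finset.sum_congr rfl fun j _ => mul_smul_comm _ _ _
    simp only [hVg]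
    simp only [Fin.sum_univ_succ (n := n)]
    simp only [hna', hν']
    rw [Finset.sum_add_distrib]
    simp only [hswap]
    rw [hB00, zero_smul, zero_add, hQBdef, hS]
    module
  have hSC : (2 : ℂ)⁻¹ • ∑ i : Fin (m + n), ∑ j : Fin (m + n),
      Cmat m n A B i j • (ΘW m n i * ΘW m n j) = (QA + QB) + x * y := by
    have hWca : ∀ i : Fin m, ΘW m n (Fin.castAdd n i) = gen (ca i) := by
      intro i
      simp only [ΘW]
      rw [dif_pos (show ((Fin.castAdd n i : Fin (m+n)) : ℕ) < m from i.2)]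
      congr 1
    have hWna : ∀ j : Fin n, ΘW m n (Fin.natAdd m j) = gen (na j) := by
      intro j
      simp only [ΘW]
      rw [dif_neg (show ¬ ((Fin.natAdd m j : Fin (m+n)) : ℕ) < m from by
        simp only [Fin.coe_natAdd, not_lt]; exact Nat.le_add_right m j)]
      congr 1
      apply Fin.ext
      simp only [hnadef, Fin.coe_natAdd, Fin.val_succ]
      omega
    have hC11 : ∀ (i j : Fin m), Cmat m n A B (Fin.castAdd n i) (Fin.castAdd n j)
        = A i.castSucc j.castSucc := by
      intro i j
      simp only [Cmat]
      rw [dif_pos (show ((Fin.castAdd n i : Fin (m+n)) : ℕ) < m from i.2),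
        dif_pos (show ((Fin.castAdd n j : Fin (m+n)) : ℕ) < m from j.2)]
      congr 1 <;> apply Fin.ext <;> simp
    have hC12 : ∀ (i : Fin m) (j : Fin n), Cmat m n A B (Fin.castAdd n i) (Fin.natAdd m j)
        = A i.castSucc (Fin.last m) * B 0 j.succ := by
      intro i j
      simp only [Cmat]
      rw [dif_pos (show ((Fin.castAdd n i : Fin (m+n)) : ℕ) < m from i.2),
        dif_neg (show ¬ ((Fin.natAdd m j : Fin (m+n)) : ℕ) < m from by
          simp only [Fin.coe_natAdd, not_lt]; exact Nat.le_add_right m j)]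
      simp only [Fin.coe_natAdd, Nat.add_sub_cancel_left]
      rfl
    have hC21 : ∀ (i : Fin n) (j : Fin m), Cmat m n A B (Fin.natAdd m i) (Fin.castAdd n j)
        = -(A j.castSucc (Fin.last m) * B 0 i.succ) := by
      intro i j
      simp only [Cmat]
      rw [dif_neg (show ¬ ((Fin.natAdd m i : Fin (m+n)) : ℕ) < m from by
          simp only [Fin.coe_natAdd, not_lt]; exact Nat.le_add_right m i),
        dif_pos (show ((Fin.castAdd n j : Fin (m+n)) : ℕ) < m from j.2)]
      simp only [Fin.coe_natAdd, Nat.add_sub_cancel_left]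
      rfl
    have hC22 : ∀ (i j : Fin n), Cmat m n A B (Fin.natAdd m i) (Fin.natAdd m j)
        = B i.succ j.succ := by
      intro i j
      simp only [Cmat]
      rw [dif_neg (show ¬ ((Fin.natAdd m i : Fin (m+n)) : ℕ) < m from by
          simp only [Fin.coe_natAdd, not_lt]; exact Nat.le_add_right m i),
        dif_neg (show ¬ ((Fin.natAdd m j : Fin (m+n)) : ℕ) < m from by
          simp only [Fin.coe_natAdd, not_lt]; exact Nat.le_add_right m j)]
      simp only [Fin.coe_natAdd, Nat.add_sub_cancel_left]
      rfl
    have hB21 : (∑ i : Fin n, ∑ j : Fin m,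
          (-(A j.castSucc (Fin.last m) * B 0 i.succ)) • (gen (na i) * gen (ca j)))
        = ∑ i : Fin m, ∑ j : Fin n,
            (A i.castSucc (Fin.last m) * B 0 j.succ) • (gen (ca i) * gen (na j)) := by
      rw [Finset.sum_comm]
      refine Finset.sum_congr rfl fun j _ => Finset.sum_congr rfl fun i _ => ?_
      rw [gen_anticomm (na i) (ca j), smul_neg, neg_smul, neg_neg]
    have hxyE : x * y = ∑ i : Fin m, ∑ j : Fin n,
        (A i.castSucc (Fin.last m) * B 0 j.succ) • (gen (ca i) * gen (na j)) := by
      rw [hxsum, hysum, Finset.sum_mul]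
      refine Finset.sum_congr rfl fun i _ => ?_
      rw [Finset.mul_sum]
      refine Finset.sum_congr rfl fun j _ => ?_
      rw [smul_mul_assoc, mul_smul_comm, smul_smul]
    simp only [Fin.sum_univ_add]
    simp only [hWca, hWna, hC11, hC12, hC21, hC22]
    rw [Finset.sum_add_distrib, Finset.sum_add_distrib]
    rw [hB21, hQAdef, hQBdef, ← hxyE]
    module
  -- commutation facts
  have hXc : ∀ z : Gr ((m+1)+(n+1)), Commute X z := fun z =>
    pair_central vx (Pi.single μ 1) z
  have hYc : ∀ z : Gr ((m+1)+(n+1)), Commute Y z := fun z =>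
    pair_central (Pi.single ν 1) vy z
  have hPc : ∀ z : Gr ((m+1)+(n+1)), Commute P z := fun z =>
    pair_central (Pi.single μ 1) (Pi.single ν 1) z
  have hxyc : ∀ z : Gr ((m+1)+(n+1)), Commute (x * y) z := fun z =>
    pair_central vx vy z
  have hQAc : ∀ z : Gr ((m+1)+(n+1)), Commute QA z := by
    intro z
    rw [hQAdef]
    exact Commute.smul_left (Commute.sum_left _ _ _ fun i _ =>
      Commute.sum_left _ _ _ fun j _ =>
        Commute.smul_left (gen_pair_central _ _ z) _) _
  have hQBc : ∀ z : Gr ((m+1)+(n+1)), Commute QB z := by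
    intro z
    rw [hQBdef]
    exact Commute.smul_left (Commute.sum_left _ _ _ fun i _ =>
      Commute.sum_left _ _ _ fun j _ =>
        Commute.smul_left (gen_pair_central _ _ z) _) _
  -- GG memberships
  have hQAmem : QA ∈ GG ((m+1)+(n+1)) * GG ((m+1)+(n+1)) := by
    rw [hQAdef]
    exact Submodule.smul_mem _ _ (Submodule.sum_mem _ fun i _ =>
      Submodule.sum_mem _ fun j _ => Submodule.smul_mem _ _
        (Submodule.mul_mem_mul (gen_mem_GG _) (gen_mem_GG _)))
  have hQBmem : QB ∈ GG ((m+1)+(n+1)) * GG ((m+1)+(n+1)) := by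
    rw [hQBdef]
    exact Submodule.smul_mem _ _ (Submodule.sum_mem _ fun i _ =>
      Submodule.sum_mem _ fun j _ => Submodule.smul_mem _ _
        (Submodule.mul_mem_mul (gen_mem_GG _) (gen_mem_GG _)))
  -- avoid memberships
  have hmemexp : ∀ (i : Fin ((m+1)+(n+1))) (u : Gr ((m+1)+(n+1))),
      u ∈ avoid i → gexp u ∈ avoid i := by
    intro i u hu
    unfold gexp
    exact sum_mem fun k _ => Subalgebra.smul_mem _ (pow_mem hu k) _
  have hQAavμ : QA ∈ avoid μ := by
    rw [hQAdef]
    exact Subalgebra.smul_mem _ (sum_mem fun i _ => sum_mem fun j _ =>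
      Subalgebra.smul_mem _ (mul_mem (gen_mem_avoid (hcaμ i)) (gen_mem_avoid (hcaμ j))) _) _
  have hQAavν : QA ∈ avoid ν := by
    rw [hQAdef]
    exact Subalgebra.smul_mem _ (sum_mem fun i _ => sum_mem fun j _ =>
      Subalgebra.smul_mem _ (mul_mem (gen_mem_avoid (hcaν i)) (gen_mem_avoid (hcaν j))) _) _
  have hQBavμ : QB ∈ avoid μ := by
    rw [hQBdef]
    exact Subalgebra.smul_mem _ (sum_mem fun i _ => sum_mem fun j _ =>
      Subalgebra.smul_mem _ (mul_mem (gen_mem_avoid (hnaμ i)) (gen_mem_avoid (hnaμ j))) _) _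
  have hQBavν : QB ∈ avoid ν := by
    rw [hQBdef]
    exact Subalgebra.smul_mem _ (sum_mem fun i _ => sum_mem fun j _ =>
      Subalgebra.smul_mem _ (mul_mem (gen_mem_avoid (hnaν i)) (gen_mem_avoid (hnaν j))) _) _
  set E : Gr ((m+1)+(n+1)) := gexp QA * gexp QB with hEdef
  have hEavμ : E ∈ avoid μ := mul_mem (hmemexp _ _ hQAavμ) (hmemexp _ _ hQBavμ)
  have hEavν : E ∈ avoid ν := mul_mem (hmemexp _ _ hQAavν) (hmemexp _ _ hQBavν)
  have hyavμ : y ∈ avoid μ := by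
    rw [hysum]
    exact sum_mem fun j _ => Subalgebra.smul_mem _ (gen_mem_avoid (hnaμ j)) _
  have hyavν : y ∈ avoid ν := by
    rw [hysum]
    exact sum_mem fun j _ => Subalgebra.smul_mem _ (gen_mem_avoid (hnaν j)) _
  have hgenνavμ : gen ν ∈ avoid μ := gen_mem_avoid hνμ
  -- exponential rewrites
  have hgP : gexp P = 1 + P := by
    have h := gexp_add_sq (0 : Gr ((m+1)+(n+1))) P (Commute.zero_left P)
      (pair_sq (Pi.single μ 1) (Pi.single ν 1)) (zero_pow (by omega))
    rw [zero_add] at h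
    rw [h, gexp_zero, one_mul]
  have hgSA : gexp (QA + X) = gexp QA * (1 + X) :=
    gexp_add_sq QA X ((hXc QA).symm) (pair_sq vx (Pi.single μ 1))
      (pow_N_eq_zero hQAmem hN0)
  have hgSB : gexp (QB + Y) = gexp QB * (1 + Y) :=
    gexp_add_sq QB Y ((hYc QB).symm) (pair_sq (Pi.single ν 1) vy)
      (pow_N_eq_zero hQBmem hN0)
  have hgSC : gexp ((QA + QB) + x * y) = gexp (QA + QB) * (1 + x * y) :=
    gexp_add_sq _ _ ((hxyc _).symm) (pair_sq vx vy)
      (pow_N_eq_zero (add_mem hQAmem hQBmem) hN0)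
  have hgQAB : gexp (QA + QB) = gexp QA * gexp QB :=
    gexp_add QA QB (hQAc (QB)) (fun i j hij => mul_pow_vanish hQAmem hQBmem i j hij)
  have hPr : ΘU m n (Fin.last m) * ΘV m n 0 = P := rfl
  -- main expansion
  have hexp : (1 + P) * (gexp QA * (1 + X) * (gexp QB * (1 + Y)))
      = E + gen ν * (y * E) + x * (gen μ * E)
        + x * (gen μ * (gen ν * (y * E))) + gen μ * (gen ν * E) := by
    have hPX : P * X = 0 := by
      rw [← (hXc P).eq, hXdef, hPdef, mul_assoc x (gen μ) (gen μ * gen ν),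
        ← mul_assoc (gen μ) (gen μ) (gen ν), gen_sq, zero_mul, mul_zero]
    have hPY : P * Y = 0 := by
      rw [hPdef, hYdef, mul_assoc (gen μ) (gen ν) (gen ν * y),
        ← mul_assoc (gen ν) (gen ν) y, gen_sq, zero_mul, mul_zero]
    have h := expand_lemma (gexp QA) (gexp QB) P X Y (hXc (gexp QB)) hPc hYc hXc hPX hPY
    rw [← hEdef] at h
    rw [h, hXdef, hYdef, hPdef]
    simp only [mul_assoc]
  have hberμ : berezin μ (E + gen ν * (y * E) + x * (gen μ * E)
        + x * (gen μ * (gen ν * (y * E))) + gen μ * (gen ν * E))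
      = gen ν * E - x * E - x * (gen ν * (y * E)) := by
    have avν_yE : gen ν * (y * E) ∈ avoid μ := mul_mem hgenνavμ (mul_mem hyavμ hEavμ)
    have t1 : berezin μ E = 0 := ber_avoid hEavμ
    have t2 : berezin μ (gen ν * (y * E)) = 0 := ber_avoid avν_yE
    have hself : ∀ z : Gr ((m+1)+(n+1)), z ∈ avoid μ → berezin μ (gen μ * z) = z := by
      intro z hz
      rw [ber_gen_self, ber_avoid hz, mul_zero, sub_zero]
    have t3 : berezin μ (x * (gen μ * E)) = -(x * E) := by
      rw [hxdef, ber_ι_mul μ vx (gen μ * E), hvxμ, zero_smul, zero_sub, hself E hEavμ]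
    have t4 : berezin μ (x * (gen μ * (gen ν * (y * E)))) = -(x * (gen ν * (y * E))) := by
      rw [hxdef, ber_ι_mul μ vx _, hvxμ, zero_smul, zero_sub, hself _ avν_yE]
    have t5 : berezin μ (gen μ * (gen ν * E)) = gen ν * E :=
      hself _ (mul_mem hgenνavμ hEavμ)
    rw [map_add, map_add, map_add, map_add, t1, t2, t3, t4, t5]
    abel
  have hberν : berezin ν (gen ν * E - x * E - x * (gen ν * (y * E)))
      = E + x * (y * E) := by
    have t1 : berezin ν (gen ν * E) = E := by
      rw [ber_gen_self, ber_avoid hEavν, mul_zero, sub_zero]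
    have t2 : berezin ν (x * E) = 0 := by
      rw [hxdef, ber_ι_mul ν vx E, hvxν, zero_smul, zero_sub, ber_avoid hEavν,
        mul_zero, neg_zero]
    have t3 : berezin ν (x * (gen ν * (y * E))) = -(x * (y * E)) := by
      rw [hxdef, ber_ι_mul ν vx _, hvxν, zero_smul, zero_sub, ber_gen_self,
        ber_avoid (mul_mem hyavν hEavν), mul_zero, sub_zero]
    rw [map_sub, map_sub, t1, t2, t3]
    abel
  rw [hPr, hgP, hSA, hSB, hSC, hgSA, hgSB, hgSC, hgQAB, ← hEdef, hexp, hberμ, hberν]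
  rw [mul_add, mul_one]
  congr 1
  rw [← (hxyc E).eq, mul_assoc]


end Contract
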